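/- Let i = (i_1,…,i_k) be a multi-index with |i| = i_1 + ⋯ + i_k and let u ∈ K[x_0,…,x_n]. Then the induced map σ* on exterior powers of Kähler differentials satisfies σ*(ω(S, y^i u)) = ((−1)^k (|i|+k−1)!)/(i_1!⋯i_k!·(k−1)!·k^{|i|}) · β(S, y^i u), where ω(S, y^i u) := (−1)^{|i|+k−1}·((|i|+k−1)!/(k−1)!)·(G_1⋯G_k)^{−1}·(y^i u / S^{|i|})·Ω_x and β(S, y^i u) := (−1)^{|i|+1}·i_1!⋯i_k!·(u/(G_1^{i_1+1}⋯G_k^{i_k+1}))·Ω_x. -/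

import Mathlib

open MvPolynomial

set_option maxHeartbeats 1000000
set_option synthInstance.maxHeartbeats 1000000
set_option maxHeartbeats 6000000

noncomputable section

/-- The polynomial ring `A = K[y_1,…,y_k,x_0,…,x_n]`, with variables indexed by
`Fin k ⊕ Fin (n+1)` (`Sum.inl` = the `y` variables, `Sum.inr` = the `x` variables). -/
abbrev PolyA (K : Type) [Field K] (n k : ℕ) : Type :=
  MvPolynomial (Fin k ⊕ Fin (n+1)) K

/-- The Dwork potential `S = ∑ y_l G_l`. -/
def dworkS (K : Type) [Field K] (n k : ℕ) (G : Fin k → MvPolynomial (Fin (n+1)) K) :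
    PolyA K n k :=
  ∑ l : Fin k, X (Sum.inl l) * rename Sum.inr (G l)

/-- `R`: the localization of `A` at `G_1⋯G_k·S`. -/
abbrev LocR (K : Type) [Field K] (n k : ℕ) (G : Fin k → MvPolynomial (Fin (n+1)) K) : Type :=
  Localization.Away ((rename Sum.inr (∏ l : Fin k, G l)) * dworkS K n k G)

/-- `B'`: the localization of `K[x_0,…,x_n]` at `G_1⋯G_k`. -/
abbrev LocB (K : Type) [Field K] (n : ℕ) {k : ℕ} (G : Fin k → MvPolynomial (Fin (n+1)) K) :
    Type :=
  Localization.Away (∏ l : Fin k, G l)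

variable (K : Type) [Field K] [CharZero K] (n k : ℕ) (G : Fin k → MvPolynomial (Fin (n+1)) K)

/-- `Ω_x = ∑_{j=0}^n (−1)^j x_j dx_0 ∧ ⋯ ∧ \hat{dx_j} ∧ ⋯ ∧ dx_n` in the exterior algebra of
`Ω^1_{R/K}`. -/
def OmegaXR : ExteriorAlgebra (LocR K n k G) (Ω[(LocR K n k G)⁄K]) :=
  ∑ i : Fin (n+1),
    (((-1 : LocR K n k G) ^ (i : ℕ)) *
        algebraMap (PolyA K n k) _ (X (Sum.inr i))) •
      ((List.ofFn fun j : Fin (n+1) => ExteriorAlgebra.ι (LocR K n k G)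
          (KaehlerDifferential.D K (LocR K n k G)
            (algebraMap (PolyA K n k) _ (X (Sum.inr j))))).eraseIdx i).prod

/-- `Ω_x` in the exterior algebra of `Ω^1_{B'/K}`. -/
def OmegaXB : ExteriorAlgebra (LocB K n G) (Ω[(LocB K n G)⁄K]) :=
  ∑ i : Fin (n+1),
    (((-1 : LocB K n G) ^ (i : ℕ)) *
        algebraMap (MvPolynomial (Fin (n+1)) K) _ (X i)) •
      ((List.ofFn fun j : Fin (n+1) => ExteriorAlgebra.ι (LocB K n G)
          (KaehlerDifferential.D K (LocB K n G)
            (algebraMap (MvPolynomial (Fin (n+1)) K) _ (X j)))).eraseIdx i).prod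


private lemma listMapEraseIdx {α β : Type*} (f : α → β) :
    ∀ (l : List α) (i : ℕ), (l.eraseIdx i).map f = (l.map f).eraseIdx i
  | [], _ => by simp
  | _ :: _, 0 => by simp
  | a :: l, (i+1) => by
      simp only [List.eraseIdx_cons_succ, List.map_cons, listMapEraseIdx f l i]


private lemma scalarAux (K : Type) [Field K] [CharZero K] (m k P : ℕ) (hk : 1 ≤ k)
    (hP : P ≠ 0) :
    ((-1 : K) ^ (m + k - 1) * (Nat.factorial (m + k - 1) : K)
        / (Nat.factorial (k - 1) : K)) * ((k : K)⁻¹) ^ m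
      = ((((-1 : K) ^ k) * (Nat.factorial (m + k - 1) : K)) /
          ((P : K) * (Nat.factorial (k - 1) : K) * (k : K) ^ m))
        * ((-1 : K) ^ (m + 1)) * (P : K) := by
  have hkm1 : m + k - 1 = m + (k - 1) := by omega
  have hk0 : (k : K) ≠ 0 := Nat.cast_ne_zero.mpr (by omega)
  have hP0 : (P : K) ≠ 0 := Nat.cast_ne_zero.mpr hP
  have hf0 : ((Nat.factorial (k - 1) : ℕ) : K) ≠ 0 :=
    Nat.cast_ne_zero.mpr (Nat.factorial_ne_zero _)
  have h : (-1 : K) ^ (k - 1) = -((-1 : K) ^ k) := by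
    have h2 : k = (k - 1) + 1 := by omega
    rw [h2]; rw [pow_succ]; simp
  rw [hkm1]
  field_simp
  have hkk : (1 / (k : K)) ^ m * (k : K) ^ m = 1 := by
    rw [← mul_pow, one_div, inv_mul_cancel₀ hk0, one_pow]
  linear_combination ((Nat.factorial (m + (k - 1)) : K) * (-1 : K) ^ m) * h
    + ((-1 : K) ^ (m + (k - 1)) * (Nat.factorial (m + (k - 1)) : K)) * hkk

/-- Let `σ : R → B'` be the `K`-algebra map fixing the `x_j` and sending
`y_λ ↦ 1/G_λ`, and let `σ*` (here, any ring homomorphism `Φ` of exterior algebras compatible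
with `σ`, with the universal derivations and with `ι` — these properties characterize the
induced map on exterior powers of Kähler differentials) be the induced map. Then
`σ*(ω(S, y^i u)) = ((−1)^k (|i|+k−1)!)/(i_1!⋯i_k!(k−1)! k^{|i|}) · β(S, y^i u)`, where
`ω(S,y^i u) = (−1)^{|i|+k−1}((|i|+k−1)!/(k−1)!)·(G_1⋯G_k)^{−1}(y^i u/S^{|i|})·Ω_x` and
`β(S,y^i u) = (−1)^{|i|+1} i_1!⋯i_k!·(u/(G_1^{i_1+1}⋯G_k^{i_k+1}))·Ω_x`. -/
theorem sigma_star_omega_eq_beta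
    (hk : 1 ≤ k) (hkn : k ≤ n)
    (d : Fin k → ℕ) (hGhom : ∀ l, (G l).IsHomogeneous (d l)) (hGne : ∀ l, G l ≠ 0)
    (i : Fin k → ℕ) (u : MvPolynomial (Fin (n+1)) K)
    -- the inverses `1/G_λ` in `B'`
    (Ginv : Fin k → LocB K n G)
    (hGinv : ∀ l, algebraMap (MvPolynomial (Fin (n+1)) K) _ (G l) * Ginv l = 1)
    -- the inverses `(G_1⋯G_k)⁻¹` and `S⁻¹` in `R`
    (PGinv : LocR K n k G)
    (hPGinv : algebraMap (PolyA K n k) _ (rename Sum.inr (∏ l : Fin k, G l)) * PGinv = 1)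
    (Sinv : LocR K n k G)
    (hSinv : algebraMap (PolyA K n k) _ (dworkS K n k G) * Sinv = 1)
    -- the map `σ : R → B'`, `x_j ↦ x_j`, `y_λ ↦ 1/G_λ`
    (σ : LocR K n k G →+* LocB K n G)
    (hσ : ∀ a : PolyA K n k, σ (algebraMap (PolyA K n k) _ a) =
      aeval (Sum.elim Ginv (fun j => algebraMap (MvPolynomial (Fin (n+1)) K) _ (X j))) a)
    -- the induced map `σ*` on the exterior algebras of Kähler differentials
    (Φ : ExteriorAlgebra (LocR K n k G) (Ω[(LocR K n k G)⁄K]) →+*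
      ExteriorAlgebra (LocB K n G) (Ω[(LocB K n G)⁄K]))
    (hΦalg : ∀ r : LocR K n k G,
      Φ (algebraMap (LocR K n k G) _ r) = algebraMap (LocB K n G) _ (σ r))
    (hΦd : ∀ r : LocR K n k G,
      Φ (ExteriorAlgebra.ι _ (KaehlerDifferential.D K (LocR K n k G) r)) =
        ExteriorAlgebra.ι _ (KaehlerDifferential.D K (LocB K n G) (σ r))) :
    Φ ((algebraMap K (LocR K n k G)
          (((-1 : K) ^ ((∑ l, i l) + k - 1)) *
            (Nat.factorial ((∑ l, i l) + k - 1) : K) / (Nat.factorial (k - 1) : K)) *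
        PGinv *
        algebraMap (PolyA K n k) _
          ((∏ l : Fin k, X (Sum.inl l) ^ i l) * rename Sum.inr u) *
        Sinv ^ (∑ l, i l)) • OmegaXR K n k G)
    = (algebraMap K (LocB K n G)
          ((((-1 : K) ^ k) * (Nat.factorial ((∑ l, i l) + k - 1) : K)) /
            (((∏ l : Fin k, Nat.factorial (i l) : ℕ) : K) *
              (Nat.factorial (k - 1) : K) * (k : K) ^ (∑ l, i l))) *
        (((-1 : LocB K n G) ^ ((∑ l, i l) + 1)) *
          ((∏ l : Fin k, Nat.factorial (i l) : ℕ) : LocB K n G) *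
          algebraMap (MvPolynomial (Fin (n+1)) K) _ u *
          ∏ l : Fin k, Ginv l ^ (i l + 1))) • OmegaXB K n k G := by

  classical
  set m := ∑ l, i l with hm
  -- σ on constants
  have hσC : ∀ c : K, σ (algebraMap K (LocR K n k G) c) = algebraMap K (LocB K n G) c := by
    intro c
    rw [IsScalarTower.algebraMap_apply K (PolyA K n k) (LocR K n k G), hσ]
    simp [MvPolynomial.algebraMap_eq]
  have key : (aeval (R := K)
      (fun j => algebraMap (MvPolynomial (Fin (n+1)) K) (LocB K n G) (X j)))
      = IsScalarTower.toAlgHom K _ _ := by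
    apply MvPolynomial.algHom_ext; intro j; simp
  have hσx : ∀ j, σ (algebraMap (PolyA K n k) (LocR K n k G) (X (Sum.inr j)))
      = algebraMap (MvPolynomial (Fin (n+1)) K) (LocB K n G) (X j) := by
    intro j; rw [hσ]; simp
  have hσy : ∀ l, σ (algebraMap (PolyA K n k) (LocR K n k G) (X (Sum.inl l))) = Ginv l := by
    intro l; rw [hσ]; simp
  have hσp : ∀ p : MvPolynomial (Fin (n+1)) K,
      σ (algebraMap (PolyA K n k) (LocR K n k G) (rename Sum.inr p))
      = algebraMap (MvPolynomial (Fin (n+1)) K) (LocB K n G) p := by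
    intro p
    rw [hσ, aeval_rename, Sum.elim_comp_inr, key]
    rfl
  have hGinv' : ∀ l, Ginv l * algebraMap (MvPolynomial (Fin (n+1)) K) (LocB K n G) (G l) = 1 :=
    fun l => by rw [mul_comm]; exact hGinv l
  have hσS : σ (algebraMap (PolyA K n k) (LocR K n k G) (dworkS K n k G))
      = algebraMap K (LocB K n G) (k : K) := by
    simp only [dworkS, map_sum, map_mul, hσy, hσp, hGinv']
    simp [map_natCast]
  have hk0 : (k : K) ≠ 0 := Nat.cast_ne_zero.mpr (by omega)
  have hσSinv : σ Sinv = algebraMap K (LocB K n G) ((k : K)⁻¹) := by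
    have h1 : algebraMap K (LocB K n G) (k : K) * σ Sinv = 1 := by
      have := congrArg σ hSinv
      rwa [map_mul, map_one, hσS] at this
    calc σ Sinv = (algebraMap K (LocB K n G) ((k : K)⁻¹) * algebraMap K (LocB K n G) (k : K))
          * σ Sinv := by rw [← map_mul, inv_mul_cancel₀ hk0, map_one, one_mul]
      _ = algebraMap K (LocB K n G) ((k : K)⁻¹) := by rw [mul_assoc, h1, mul_one]
  have hσPG : σ PGinv = ∏ l, Ginv l := by
    have h1 : algebraMap (MvPolynomial (Fin (n+1)) K) (LocB K n G) (∏ l, G l) * σ PGinv = 1 := by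
      have := congrArg σ hPGinv
      rwa [map_mul, map_one, hσp] at this
    have h2 : algebraMap (MvPolynomial (Fin (n+1)) K) (LocB K n G) (∏ l, G l)
        * ∏ l, Ginv l = 1 := by
      rw [map_prod, ← Finset.prod_mul_distrib]
      simp [hGinv]
    calc σ PGinv
        = (algebraMap (MvPolynomial (Fin (n+1)) K) (LocB K n G) (∏ l, G l) * ∏ l, Ginv l)
            * σ PGinv := by rw [h2, one_mul]
      _ = (∏ l, Ginv l) *
          (algebraMap (MvPolynomial (Fin (n+1)) K) (LocB K n G) (∏ l, G l) * σ PGinv) := by ring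
      _ = ∏ l, Ginv l := by rw [h1, mul_one]
  have hσyu : σ (algebraMap (PolyA K n k) (LocR K n k G)
        ((∏ l : Fin k, X (Sum.inl l) ^ i l) * rename Sum.inr u))
      = (∏ l, Ginv l ^ i l) * algebraMap (MvPolynomial (Fin (n+1)) K) (LocB K n G) u := by
    rw [map_mul, map_mul, hσp]
    congr 1
    simp only [map_prod, map_pow, hσy]
  -- Φ respects smul (via σ)
  have hΦsmul : ∀ (c : LocR K n k G) (w : ExteriorAlgebra (LocR K n k G) (Ω[(LocR K n k G)⁄K])),
      Φ (c • w) = σ c • Φ w := by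
    intro c w
    rw [Algebra.smul_def, map_mul, hΦalg, Algebra.smul_def]
  -- Φ sends Ω_x to Ω_x
  have hΦΩ : Φ (OmegaXR K n k G) = OmegaXB K n k G := by
    rw [OmegaXR, OmegaXB, map_sum]
    refine Finset.sum_congr rfl fun i0 _ => ?_
    rw [hΦsmul]
    congr 1
    · rw [map_mul, map_pow, map_neg, map_one, hσx]
    · rw [map_list_prod Φ, listMapEraseIdx, List.map_ofFn]
      congr 2
      refine congrArg List.ofFn (funext fun j => ?_)
      simp only [Function.comp_apply]
      rw [hΦd, hσx]
  -- main computation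
  rw [hΦsmul, hΦΩ]
  congr 1
  rw [map_mul, map_mul, map_mul, map_pow, hσC, hσSinv, hσPG, hσyu]
  have hP0 : ((∏ l : Fin k, Nat.factorial (i l) : ℕ) : K) ≠ 0 :=
    Nat.cast_ne_zero.mpr (Finset.prod_ne_zero_iff.mpr
      fun l _ => Nat.factorial_ne_zero (i l))
  have hf0 : ((Nat.factorial (k - 1) : ℕ) : K) ≠ 0 :=
    Nat.cast_ne_zero.mpr (Nat.factorial_ne_zero _)
  have hscalar := scalarAux K m k (∏ l : Fin k, Nat.factorial (i l)) hk
    (Finset.prod_ne_zero_iff.mpr fun l _ => Nat.factorial_ne_zero (i l))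
  have hprodG : (∏ l, Ginv l) * (∏ l, Ginv l ^ i l) = ∏ l : Fin k, Ginv l ^ (i l + 1) := by
    rw [← Finset.prod_mul_distrib]
    exact Finset.prod_congr rfl fun l _ => (pow_succ' (Ginv l) (i l)).symm
  have hs : algebraMap K (LocB K n G)
        ((-1 : K) ^ (m + k - 1) * (Nat.factorial (m + k - 1) : K)
          / (Nat.factorial (k - 1) : K))
        * (algebraMap K (LocB K n G) ((k : K)⁻¹)) ^ m
      = algebraMap K (LocB K n G)
          ((((-1 : K) ^ k) * (Nat.factorial (m + k - 1) : K)) /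
            (((∏ l : Fin k, Nat.factorial (i l) : ℕ) : K)
              * (Nat.factorial (k - 1) : K) * (k : K) ^ m))
        * ((-1 : LocB K n G) ^ (m + 1))
        * ((∏ l : Fin k, Nat.factorial (i l) : ℕ) : LocB K n G) := by
    rw [show ((-1 : LocB K n G) ^ (m + 1)) = algebraMap K (LocB K n G) ((-1 : K) ^ (m + 1)) by
          rw [map_pow, map_neg, map_one],
        show ((∏ l : Fin k, Nat.factorial (i l) : ℕ) : LocB K n G)
            = algebraMap K (LocB K n G) (((∏ l : Fin k, Nat.factorial (i l) : ℕ)) : K) from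
          (map_natCast _ _).symm,
        ← map_pow, ← map_mul, ← map_mul, ← map_mul]
    exact congrArg _ hscalar
  linear_combination (algebraMap (MvPolynomial (Fin (n+1)) K) (LocB K n G) u
      * (∏ l, Ginv l) * (∏ l, Ginv l ^ i l)) * hs
    + (algebraMap K (LocB K n G)
          ((((-1 : K) ^ k) * (Nat.factorial (m + k - 1) : K)) /
            (((∏ l : Fin k, Nat.factorial (i l) : ℕ) : K)
              * (Nat.factorial (k - 1) : K) * (k : K) ^ m))
        * ((-1 : LocB K n G) ^ (m + 1))
        * ((∏ l : Fin k, Nat.factorial (i l) : ℕ) : LocB K n G)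
        * algebraMap (MvPolynomial (Fin (n+1)) K) (LocB K n G) u) * hprodG

end
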